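/- Let A⁺, A⁻ : ℝ → ℝ be continuous and u⁺, u⁻, û ∈ ℝ. Assume the Rankine–Hugoniot condition A⁺(u⁺) = A⁻(u⁻), that û lies strictly between u⁻ and u⁺, and that the Kruzkov entropy inequality holds at every c that lies strictly between u⁻ and u⁺ with c ≠ û. Then sign(u⁺−u⁻)·A⁺(u⁺) ≤ sign(u⁺−u⁻)·A⁺(û) and sign(u⁺−u⁻)·A⁺(u⁺) ≤ sign(u⁺−u⁻)·A⁻(û). -/
import Mathlib


open MeasureTheory Filter Set

/-- The Kruzkov entropy inequality at `c` for data `(um, up, uh)`: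
`A⁺(u⁺)·sign(u⁺−c) − 2·sign(u⁺−û)·A⁺(c)·𝟙_{(û,u⁺)}(c) ≤
 A⁻(u⁻)·sign(u⁻−c) − 2·sign(u⁻−û)·A⁻(c)·𝟙_{(û,u⁻)}(c)`. -/
def KruzkovIneq (Ap Am : ℝ → ℝ) (um up uh c : ℝ) : Prop :=
  Ap up * Real.sign (up - c) -
      2 * Real.sign (up - uh) * Ap c * Set.indicator (Set.uIoo uh up) (1 : ℝ → ℝ) c
    ≤ Am um * Real.sign (um - c) -
      2 * Real.sign (um - uh) * Am c * Set.indicator (Set.uIoo uh um) (1 : ℝ → ℝ) c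

private lemma left_le (f : ℝ → ℝ) (hf : Continuous f) {a b K : ℝ} (hab : a < b)
    (h : ∀ c ∈ Set.Ioo a b, f c ≤ K) : f a ≤ K := by
  refine le_of_tendsto (hf.continuousWithinAt (s := Set.Ioi a)) ?_
  filter_upwards [Ioo_mem_nhdsGT hab] with x hx using h x hx

private lemma left_ge (f : ℝ → ℝ) (hf : Continuous f) {a b K : ℝ} (hab : a < b)
    (h : ∀ c ∈ Set.Ioo a b, K ≤ f c) : K ≤ f a := by
  have := left_le (fun x => -f x) hf.neg (K := -K) hab
    (fun c hc => neg_le_neg (h c hc))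
  simp only [neg_le_neg_iff] at this; linarith [this]

private lemma right_le (f : ℝ → ℝ) (hf : Continuous f) {a b K : ℝ} (hab : a < b)
    (h : ∀ c ∈ Set.Ioo a b, f c ≤ K) : f b ≤ K := by
  refine le_of_tendsto (hf.continuousWithinAt (s := Set.Iio b)) ?_
  filter_upwards [Ioo_mem_nhdsLT hab] with x hx using h x hx

private lemma right_ge (f : ℝ → ℝ) (hf : Continuous f) {a b K : ℝ} (hab : a < b)
    (h : ∀ c ∈ Set.Ioo a b, K ≤ f c) : K ≤ f b := by
  have := right_le (fun x => -f x) hf.neg (K := -K) hab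
    (fun c hc => neg_le_neg (h c hc))
  simp only [neg_le_neg_iff] at this; linarith [this]

theorem stmt_7 (Ap Am : ℝ → ℝ) (hAp : Continuous Ap) (hAm : Continuous Am)
    (up um uh : ℝ)
    (hRH : Ap up = Am um)
    (huh : uh ∈ Set.uIoo um up)
    (hkruz : ∀ c ∈ Set.uIoo um up, c ≠ uh → KruzkovIneq Ap Am um up uh c) :
    Real.sign (up - um) * Ap up ≤ Real.sign (up - um) * Ap uh ∧
    Real.sign (up - um) * Ap up ≤ Real.sign (up - um) * Am uh := by
  rcases lt_or_ge um up with hlt | hle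
  · -- um < up
    rw [Set.uIoo_of_lt hlt] at huh hkruz
    obtain ⟨h1, h2⟩ := huh
    have hs : Real.sign (up - um) = 1 := Real.sign_of_pos (by linarith)
    have claim1 : ∀ c ∈ Set.Ioo uh up, Ap up ≤ Ap c := by
      intro c ⟨hc1, hc2⟩
      have hk := hkruz c ⟨by linarith, hc2⟩ (by intro h; linarith [h ▸ hc1])
      unfold KruzkovIneq at hk
      rw [Set.uIoo_of_lt h2, Set.uIoo_of_gt h1] at hk
      rw [Real.sign_of_pos (show (0:ℝ) < up - c by linarith),
        Real.sign_of_pos (show (0:ℝ) < up - uh by linarith),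
        Real.sign_of_neg (show um - c < (0:ℝ) by linarith),
        Real.sign_of_neg (show um - uh < (0:ℝ) by linarith),
        Set.indicator_of_mem (Set.mem_Ioo.2 ⟨hc1, hc2⟩),
        Set.indicator_of_notMem (by simp [Set.mem_Ioo]; intro h; linarith)] at hk
      simp only [Pi.one_apply] at hk
      linarith
    have claim2 : ∀ c ∈ Set.Ioo um uh, Ap up ≤ Am c := by
      intro c ⟨hc1, hc2⟩
      have hk := hkruz c ⟨hc1, by linarith⟩ (ne_of_lt hc2)
      unfold KruzkovIneq at hk
      rw [Set.uIoo_of_lt h2, Set.uIoo_of_gt h1] at hk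
      rw [Real.sign_of_pos (show (0:ℝ) < up - c by linarith),
        Real.sign_of_pos (show (0:ℝ) < up - uh by linarith),
        Real.sign_of_neg (show um - c < (0:ℝ) by linarith),
        Real.sign_of_neg (show um - uh < (0:ℝ) by linarith),
        Set.indicator_of_notMem (by simp [Set.mem_Ioo]; intro h; linarith),
        Set.indicator_of_mem (Set.mem_Ioo.2 ⟨hc1, hc2⟩)] at hk
      simp only [Pi.one_apply] at hk
      linarith
    rw [hs]
    constructor
    · simpa using left_ge Ap hAp h2 claim1
    · simpa using right_ge Am hAm h1 claim2
  · -- up < um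
    have hlt : up < um := by
      rcases lt_or_eq_of_le hle with h | h
      · exact h
      · exfalso; rw [h] at huh; simp [Set.uIoo] at huh
    rw [Set.uIoo_of_gt hlt] at huh hkruz
    obtain ⟨h1, h2⟩ := huh
    have hs : Real.sign (up - um) = -1 := Real.sign_of_neg (by linarith)
    have claim1 : ∀ c ∈ Set.Ioo up uh, Ap c ≤ Ap up := by
      intro c ⟨hc1, hc2⟩
      have hk := hkruz c ⟨hc1, by linarith⟩ (ne_of_lt hc2)
      unfold KruzkovIneq at hk
      rw [Set.uIoo_of_gt h1, Set.uIoo_of_lt h2] at hk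
      rw [Real.sign_of_neg (show up - c < (0:ℝ) by linarith),
        Real.sign_of_neg (show up - uh < (0:ℝ) by linarith),
        Real.sign_of_pos (show (0:ℝ) < um - c by linarith),
        Real.sign_of_pos (show (0:ℝ) < um - uh by linarith),
        Set.indicator_of_mem (Set.mem_Ioo.2 ⟨hc1, hc2⟩),
        Set.indicator_of_notMem (by simp [Set.mem_Ioo]; intro h; linarith)] at hk
      simp only [Pi.one_apply] at hk
      linarith
    have claim2 : ∀ c ∈ Set.Ioo uh um, Am c ≤ Ap up := by
      intro c ⟨hc1, hc2⟩
      have hk := hkruz c ⟨by linarith, hc2⟩ (by intro h; linarith [h ▸ hc1])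
      unfold KruzkovIneq at hk
      rw [Set.uIoo_of_gt h1, Set.uIoo_of_lt h2] at hk
      rw [Real.sign_of_neg (show up - c < (0:ℝ) by linarith),
        Real.sign_of_neg (show up - uh < (0:ℝ) by linarith),
        Real.sign_of_pos (show (0:ℝ) < um - c by linarith),
        Real.sign_of_pos (show (0:ℝ) < um - uh by linarith),
        Set.indicator_of_notMem (by simp [Set.mem_Ioo]; intro h; linarith),
        Set.indicator_of_mem (Set.mem_Ioo.2 ⟨hc1, hc2⟩)] at hk
      simp only [Pi.one_apply] at hk
      linarith
    rw [hs]
    constructor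
    · have := right_le Ap hAp h1 claim1; linarith
    · have := left_le Am hAm h2 claim2; linarith
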